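/- With the data below, suppose w : ℝ → ℝ^{2N+1} is differentiable, w(t, i) > 0 for all t ∈ [0, T] and all i ∈ {0, …, 2N}, and w satisfies the linear system ∂ₜ w(t, i) − k·P_i·w(t, i) + a_i·w(t, i+1)·[i < 2N] + b_i·w(t, i−1)·[i > 0] = 0 for all t ∈ [0, T] and all i, together with w(T, i) = 1, where a_i := λ⁺·exp(−k·s·Δ⁺_i − 1)·exp(k·Z⁺_i·Δ⁺_i) and b_i := λ⁻·exp(k·s·Δ⁻_i − 1)·exp(−k·Z⁻_i·Δ⁻_i). Then the function g(t, i) := (1/k)·log w(t, i) satisfies g(T, i) = 0 and, for all t ∈ [0, T] and all i ∈ {0, …, 2N}: ∂ₜ g(t, i) − P_i + (λ⁺/k)·exp(−k·s·Δ⁺_i − 1)·exp(k·Z⁺_i·Δ⁺_i)·exp(k·(g(t, i+1) − g(t, i)))·[i < 2N] + (λ⁻/k)·exp(k·s·Δ⁻_i − 1)·exp(−k·Z⁻_i·Δ⁻_i)·exp(k·(g(t, i−1) − g(t, i)))·[i > 0] = 0. -/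
import Mathlib


/-- The substitution `g = (1/k) log w` linearizes the AMM HJB equation: if `w` is a
positive differentiable solution of the linear system with terminal value 1, then
`g` solves the (exponential) HJB equation with terminal value 0. -/
theorem stmt5 (N : ℕ) (hN : 1 ≤ N)
    (Δp Δm Zp Zm P : Fin (2 * N + 1) → ℝ)
    (hΔp : ∀ i : Fin (2 * N + 1), (i : ℕ) < 2 * N → 0 < Δp i)
    (hΔm : ∀ i : Fin (2 * N + 1), 0 < (i : ℕ) → 0 < Δm i)
    (hZp : ∀ i : Fin (2 * N + 1), (i : ℕ) < 2 * N → 0 < Zp i)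
    (hZm : ∀ i : Fin (2 * N + 1), 0 < (i : ℕ) → 0 < Zm i)
    (lp lm k s T : ℝ) (hlp : 0 < lp) (hlm : 0 < lm) (hk : 0 < k) (hT : 0 < T)
    (w : ℝ → Fin (2 * N + 1) → ℝ)
    (hdiff : Differentiable ℝ w)
    (hpos : ∀ t ∈ Set.Icc (0 : ℝ) T, ∀ i : Fin (2 * N + 1), 0 < w t i)
    (hsys : ∀ t ∈ Set.Icc (0 : ℝ) T, ∀ i : Fin (2 * N + 1),
      deriv (fun τ : ℝ => w τ i) t - k * P i * w t i
        + (if h : (i : ℕ) < 2 * N then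
            lp * Real.exp (-(k * s * Δp i) - 1) * Real.exp (k * Zp i * Δp i)
              * w t ⟨(i : ℕ) + 1, by omega⟩
          else 0)
        + (if h : 0 < (i : ℕ) then
            lm * Real.exp (k * s * Δm i - 1) * Real.exp (-(k * Zm i * Δm i))
              * w t ⟨(i : ℕ) - 1, by omega⟩
          else 0) = 0)
    (hterm : ∀ i : Fin (2 * N + 1), w T i = 1)
    (g : ℝ → Fin (2 * N + 1) → ℝ)
    (hg : ∀ t : ℝ, ∀ i : Fin (2 * N + 1), g t i = (1 / k) * Real.log (w t i)) :
    (∀ i : Fin (2 * N + 1), g T i = 0) ∧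
    (∀ t ∈ Set.Icc (0 : ℝ) T, ∀ i : Fin (2 * N + 1),
      deriv (fun τ : ℝ => g τ i) t - P i
        + (if h : (i : ℕ) < 2 * N then
            (lp / k) * Real.exp (-(k * s * Δp i) - 1) * Real.exp (k * Zp i * Δp i)
              * Real.exp (k * (g t ⟨(i : ℕ) + 1, by omega⟩ - g t i))
          else 0)
        + (if h : 0 < (i : ℕ) then
            (lm / k) * Real.exp (k * s * Δm i - 1) * Real.exp (-(k * Zm i * Δm i))
              * Real.exp (k * (g t ⟨(i : ℕ) - 1, by omega⟩ - g t i))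
          else 0) = 0) := by

  have hk' : k ≠ 0 := hk.ne'
  constructor
  · intro i
    rw [hg, hterm, Real.log_one, mul_zero]
  · intro t ht i
    have hdi : ∀ j : Fin (2 * N + 1), Differentiable ℝ (fun τ => w τ j) := by
      intro j
      exact (ContinuousLinearMap.proj j :
        (Fin (2 * N + 1) → ℝ) →L[ℝ] ℝ).differentiable.comp hdiff
    have hwt : 0 < w t i := hpos t ht i
    have hexp : ∀ j : Fin (2 * N + 1), 0 < w t j →
        Real.exp (k * (1 / k * Real.log (w t j) - 1 / k * Real.log (w t i)))
          = w t j / w t i := by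
      intro j hj
      rw [show k * (1 / k * Real.log (w t j) - 1 / k * Real.log (w t i))
            = Real.log (w t j) - Real.log (w t i) by field_simp,
        Real.exp_sub, Real.exp_log hj, Real.exp_log hwt]
    have hD : deriv (fun τ => (1 / k) * Real.log (w τ i)) t
        = (1 / k) * (deriv (fun τ => w τ i) t / w t i) :=
      ((((hdi i) t).hasDerivAt.log hwt.ne').const_mul (1 / k)).deriv
    simp only [hg]
    rw [hD]
    have key := hsys t ht i
    split_ifs at key ⊢ with h1 h2 h2
    · rw [hexp _ (hpos t ht _), hexp _ (hpos t ht _)]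
      have hDval : deriv (fun τ => w τ i) t
          = k * P i * w t i
            - lp * Real.exp (-(k * s * Δp i) - 1) * Real.exp (k * Zp i * Δp i)
              * w t ⟨(i : ℕ) + 1, by omega⟩
            - lm * Real.exp (k * s * Δm i - 1) * Real.exp (-(k * Zm i * Δm i))
              * w t ⟨(i : ℕ) - 1, by omega⟩ := by linarith
      rw [hDval]; field_simp; ring
    · rw [hexp _ (hpos t ht _)]
      have hDval : deriv (fun τ => w τ i) t
          = k * P i * w t i
            - lp * Real.exp (-(k * s * Δp i) - 1) * Real.exp (k * Zp i * Δp i)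
              * w t ⟨(i : ℕ) + 1, by omega⟩ := by linarith
      rw [hDval]; field_simp; ring
    · rw [hexp _ (hpos t ht _)]
      have hDval : deriv (fun τ => w τ i) t
          = k * P i * w t i
            - lm * Real.exp (k * s * Δm i - 1) * Real.exp (-(k * Zm i * Δm i))
              * w t ⟨(i : ℕ) - 1, by omega⟩ := by linarith
      rw [hDval]; field_simp; ring
    · exfalso; omega
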